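/- Let R > 0 and m > 1, and set C_m := max{10000, 200·2^{2/(m−1)}}. Let ρ : [R, 3R] → ℝ be nonnegative and nonincreasing. Then there exists r ∈ [R, 2R] such that ∫_r^{3R} ρ(x)^m dx ≤ (C_m / R) · ρ(R)^{m−1} · ∫_r^{3R} (x − r)·ρ(x) dx. -/

import Mathlib

open MeasureTheory Set

private lemma rpow_young {a b α : ℝ} (hb : 0 < b) (hba : b ≤ a) (hα0 : 0 ≤ α) (hα1 : α ≤ 1) :
    α * a ^ (α - 1) * (a - b) + b ^ α ≤ a ^ α := by
  have ha : 0 < a := lt_of_lt_of_le hb hba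
  have hkey : (b / a) ^ α * 1 ^ (1 - α) ≤ α * (b / a) + (1 - α) * 1 :=
    Real.geom_mean_le_arith_mean2_weighted hα0 (by linarith) (by positivity) zero_le_one
      (by ring)
  rw [Real.one_rpow, mul_one, mul_one, Real.div_rpow hb.le ha.le] at hkey
  have haα : (0:ℝ) < a ^ α := Real.rpow_pos_of_pos ha α
  have h2 : b ^ α ≤ (α * (b / a) + (1 - α)) * a ^ α := by
    have := mul_le_mul_of_nonneg_right hkey haα.le
    calc b ^ α = b ^ α / a ^ α * a ^ α := by field_simp
    _ ≤ _ := this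
  have h3 : a ^ α = a ^ (α - 1) * a := by
    rw [← Real.rpow_add_one ha.ne' (α - 1), sub_add_cancel]
  have h4 : (α * (b / a) + (1 - α)) * a ^ α = α * b * a ^ (α - 1) + (1 - α) * a ^ α := by
    rw [h3]; field_simp
  nlinarith [h2, h3, h4]

private lemma const_big {m : ℝ} (hm : 1 < m) :
    4 * m < max 10000 (200 * (2 : ℝ) ^ (2 / (m - 1))) * (m - 1) := by
  have hm1 : 0 < m - 1 := by linarith
  rcases le_or_gt (1/2000 : ℝ) (m - 1) with h | h
  · have hmax : (10000:ℝ) ≤ max 10000 (200 * (2 : ℝ) ^ (2 / (m - 1))) := le_max_left _ _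
    have h2 : (0:ℝ) ≤ 200 * (2 : ℝ) ^ (2 / (m - 1)) := by positivity
    nlinarith [mul_le_mul_of_nonneg_right hmax hm1.le]
  · have hmax : (200 * (2 : ℝ) ^ (2 / (m - 1))) ≤ max 10000 (200 * (2 : ℝ) ^ (2 / (m - 1))) :=
      le_max_right _ _
    set y := 2 / (m - 1) with hy
    have hy0 : 4000 < y := by
      rw [hy, lt_div_iff₀ hm1]; nlinarith
    have h2y : (2:ℝ) ^ y = Real.exp (Real.log 2 * y) := by
      rw [Real.rpow_def_of_pos (by norm_num : (0:ℝ) < 2)]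
    have hexp : Real.log 2 * y + 1 ≤ Real.exp (Real.log 2 * y) := Real.add_one_le_exp _
    have hlog2 : (0.6931471803 : ℝ) < Real.log 2 := Real.log_two_gt_d9
    have h2yge : 0.69 * y + 1 ≤ (2:ℝ) ^ y := by
      rw [h2y]
      nlinarith
    have hym : y * (m - 1) = 2 := by rw [hy]; field_simp
    have hstep : 200 * (0.69 * y + 1) * (m - 1) ≤ 200 * (2:ℝ) ^ y * (m - 1) := by
      nlinarith
    have hfin : 4 * m < 200 * (0.69 * y + 1) * (m - 1) := by nlinarith
    nlinarith [mul_le_mul_of_nonneg_right hmax hm1.le]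

private lemma chain_lemma {R M c₁ m : ℝ} (hR : 0 < R) (hM : 0 < M) (hm : 1 < m) (hc₁ : 0 < c₁)
    (h : ℝ → ℝ)
    (hpos : ∀ s ∈ Icc R (2*R), 0 < h s)
    (hlip : ∀ r s, R ≤ r → r ≤ s → s ≤ 2*R → h r - h s ≤ M * (s - r))
    (hchain : ∀ r s, R ≤ r → r ≤ s → s ≤ 2*R → h s + c₁ * (s - r) * h s ^ (1/m) ≤ h r) :
    (m-1)/m * c₁ / 2 * R ≤ h R ^ ((m-1)/m) := by
  have hm0 : (0:ℝ) < m := by linarith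
  set α := (m-1)/m with hα
  have hα0 : 0 < α := div_pos (by linarith) hm0
  have hα1 : α < 1 := (div_lt_one hm0).2 (by linarith)
  have hRmem : R ∈ Icc R (2*R) := ⟨le_rfl, by linarith⟩
  have hmono : ∀ r s, R ≤ r → r ≤ s → s ≤ 2*R → h s ≤ h r := by
    intro r s h1 h2 h3
    have hc := hchain r s h1 h2 h3
    have hhs : 0 ≤ h s := (hpos s ⟨le_trans h1 h2, h3⟩).le
    nlinarith [Real.rpow_nonneg hhs (1/m),
      mul_nonneg (mul_nonneg hc₁.le (by linarith : (0:ℝ) ≤ s - r)) (Real.rpow_nonneg hhs (1/m))]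
  set S := {s : ℝ | s ∈ Icc R (2*R) ∧ h s ^ α + α * c₁ / 2 * (s - R) ≤ h R ^ α} with hS
  have hRS : R ∈ S := ⟨hRmem, by simp⟩
  have hSne : S.Nonempty := ⟨R, hRS⟩
  have hSbdd : BddAbove S := ⟨2*R, fun x hx => hx.1.2⟩
  set σ := sSup S with hσdef
  have hσ1 : R ≤ σ := le_csSup hSbdd hRS
  have hσ2 : σ ≤ 2*R := csSup_le hSne (fun x hx => hx.1.2)
  have hσIcc : σ ∈ Icc R (2*R) := ⟨hσ1, hσ2⟩
  have hσS : σ ∈ S := by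
    refine ⟨hσIcc, ?_⟩
    refine le_of_forall_pos_le_add (fun ε hε => ?_)
    have hden : (0:ℝ) < α * c₁ / 2 + 1 := by positivity
    obtain ⟨s, hsS, hs⟩ : ∃ s ∈ S, σ - ε / (α * c₁ / 2 + 1) < s := by
      apply exists_lt_of_lt_csSup hSne
      have : 0 < ε / (α * c₁ / 2 + 1) := by positivity
      linarith
    have hsσ : s ≤ σ := le_csSup hSbdd hsS
    have h1 : h σ ≤ h s := hmono s σ hsS.1.1 hsσ hσ2
    have h2 : h σ ^ α ≤ h s ^ α :=
      Real.rpow_le_rpow (hpos σ hσIcc).le h1 hα0.le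
    have h3 := hsS.2
    have hkey : α * c₁ / 2 * (σ - s) ≤ ε := by
      have hd : σ - s < ε / (α * c₁ / 2 + 1) := by linarith
      have h0 : 0 ≤ σ - s := by linarith
      have e1 : α * c₁ / 2 * (σ - s) ≤ (α * c₁ / 2 + 1) * (σ - s) := by nlinarith
      have e2 : (α * c₁ / 2 + 1) * (σ - s) ≤ (α * c₁ / 2 + 1) * (ε / (α * c₁ / 2 + 1)) := by
        nlinarith
      have e3 : (α * c₁ / 2 + 1) * (ε / (α * c₁ / 2 + 1)) = ε := by field_simp
      linarith
    have hsplit : α * c₁ / 2 * (σ - R) = α * c₁ / 2 * (s - R) + α * c₁ / 2 * (σ - s) := by ring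
    linarith [h2, h3, hkey]
  rcases lt_or_eq_of_le hσ2 with hlt | heq
  · exfalso
    have hhσ : 0 < h σ := hpos σ hσIcc
    obtain ⟨s', hσs', hs'2R, hs'near⟩ :
        ∃ s', σ < s' ∧ s' ≤ 2*R ∧ M * (s' - σ) ≤ h σ / 2 := by
      refine ⟨σ + min (h σ / (2*M)) (2*R - σ), ?_, ?_, ?_⟩
      · have : 0 < min (h σ / (2*M)) (2*R - σ) := lt_min (by positivity) (by linarith)
        linarith
      · have := min_le_right (h σ / (2*M)) (2*R - σ); linarith
      · have h1 : min (h σ / (2*M)) (2*R - σ) ≤ h σ / (2*M) := min_le_left _ _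
        have e : σ + min (h σ / (2*M)) (2*R - σ) - σ = min (h σ / (2*M)) (2*R - σ) := by ring
        rw [e]
        calc M * min (h σ / (2*M)) (2*R - σ) ≤ M * (h σ / (2*M)) :=
              mul_le_mul_of_nonneg_left h1 hM.le
        _ = h σ / 2 := by field_simp
    have hσs'le : σ ≤ s' := hσs'.le
    have hs'Icc : s' ∈ Icc R (2*R) := ⟨by linarith, hs'2R⟩
    have hs'pos : 0 < h s' := hpos s' hs'Icc
    have hhalf : h σ / 2 ≤ h s' := by
      have hl := hlip σ s' hσ1 hσs'le hs'2R
      linarith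
    have hch := hchain σ s' hσ1 hσs'le hs'2R
    have hrpowmono : (h σ / 2) ^ (1/m) ≤ h s' ^ (1/m) :=
      Real.rpow_le_rpow (by positivity) hhalf (by positivity)
    have hdrop : c₁ * (s' - σ) * (h σ / 2) ^ (1/m) ≤ h σ - h s' := by
      have h5 : c₁ * (s' - σ) * (h σ / 2) ^ (1/m) ≤ c₁ * (s' - σ) * h s' ^ (1/m) := by
        apply mul_le_mul_of_nonneg_left hrpowmono
        have : 0 ≤ s' - σ := by linarith
        positivity
      linarith
    have hyoung := rpow_young hs'pos (hmono σ s' hσ1 hσs'le hs'2R) hα0.le hα1.le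
    have hone : h σ ^ (α - 1) * h σ ^ (1/m) = 1 := by
      rw [← Real.rpow_add hhσ]
      have e : α - 1 + 1/m = 0 := by rw [hα]; field_simp; ring
      rw [e, Real.rpow_zero]
    have h2pos : (0:ℝ) < (2:ℝ)^(1/m) := Real.rpow_pos_of_pos (by norm_num) _
    have h2m : (2:ℝ)^(1/m) ≤ 2 := by
      have h1m : 1/m ≤ 1 := by
        rw [div_le_one hm0]; linarith
      calc (2:ℝ)^(1/m) ≤ (2:ℝ)^(1:ℝ) := Real.rpow_le_rpow_of_exponent_le one_le_two h1m
      _ = 2 := Real.rpow_one 2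
    have hfact : (1:ℝ)/2 ≤ h σ ^ (α - 1) * (h σ / 2) ^ (1/m) := by
      have hdivrpow : (h σ / 2) ^ (1/m) = h σ ^ (1/m) / (2:ℝ)^(1/m) :=
        Real.div_rpow hhσ.le (by norm_num) _
      rw [hdivrpow]
      have e : h σ ^ (α-1) * (h σ ^ (1/m) / (2:ℝ)^(1/m)) = 1 / (2:ℝ)^(1/m) := by
        rw [← mul_div_assoc, hone]
      rw [e, div_le_div_iff₀ (by norm_num) h2pos]
      linarith
    have hs'S : s' ∈ S := by
      refine ⟨hs'Icc, ?_⟩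
      have h8 : (0:ℝ) ≤ α * c₁ * (s' - σ) :=
        mul_nonneg (mul_nonneg hα0.le hc₁.le) (by linarith)
      have h6 : α * h σ ^ (α-1) * (c₁ * (s' - σ) * (h σ/2) ^ (1/m)) ≤
          α * h σ ^ (α-1) * (h σ - h s') := by
        apply mul_le_mul_of_nonneg_left hdrop
        positivity
      have h7 := mul_le_mul_of_nonneg_left hfact h8
      have hkey2 : h s' ^ α + α * c₁ / 2 * (s' - σ) ≤ h σ ^ α := by
        nlinarith [hyoung, h6, h7]
      have hσineq := hσS.2
      have hring : α * c₁ / 2 * (s' - R) = α * c₁ / 2 * (s' - σ) + α * c₁ / 2 * (σ - R) := by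
        ring
      linarith
    have : s' ≤ σ := le_csSup hSbdd hs'S
    linarith
  · have h2 := hσS.2
    rw [heq] at h2
    have h0 : 0 ≤ h (2*R) ^ α := Real.rpow_nonneg (hpos _ ⟨by linarith, le_rfl⟩).le α
    have e : 2*R - R = R := by ring
    rw [e] at h2
    linarith

set_option maxHeartbeats 2000000 in
/-- Lemma of local clustering (Lemma 5.1). -/
theorem stmt_0 (R m : ℝ) (hR : 0 < R) (hm : 1 < m)
    (ρ : ℝ → ℝ)
    (hnn : ∀ x ∈ Icc R (3 * R), 0 ≤ ρ x)
    (hanti : AntitoneOn ρ (Icc R (3 * R))) :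
    ∃ r ∈ Icc R (2 * R),
      (∫ x in r..(3 * R), ρ x ^ m) ≤
        (max 10000 (200 * (2 : ℝ) ^ (2 / (m - 1))) / R) * ρ R ^ (m - 1) *
          ∫ x in r..(3 * R), (x - r) * ρ x := by
  by_contra hcon
  push_neg at hcon
  have hm0 : (0:ℝ) < m := by linarith
  have hm1 : (0:ℝ) ≤ m - 1 := by linarith
  set C := max (10000:ℝ) (200 * (2:ℝ) ^ (2/(m-1))) with hCdef
  have hC0 : (0:ℝ) < C := lt_of_lt_of_le (by norm_num) (le_max_left _ _)
  set M := ρ R with hMdef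
  have hRIcc : R ∈ Icc R (3*R) := ⟨le_rfl, by linarith⟩
  have hMnn : 0 ≤ M := hnn R hRIcc
  have hρle : ∀ x ∈ Icc R (3*R), ρ x ≤ M := fun x hx => hanti hRIcc hx hx.1
  -- integrability helpers
  have hsub : ∀ a b : ℝ, R ≤ a → a ≤ b → b ≤ 3*R → uIcc a b ⊆ Icc R (3*R) := by
    intro a b ha hab hb
    rw [uIcc_of_le hab]
    exact Icc_subset_Icc ha hb
  have hintρ : ∀ a b : ℝ, R ≤ a → a ≤ b → b ≤ 3*R → IntervalIntegrable ρ volume a b := by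
    intro a b ha hab hb
    exact (hanti.mono (hsub a b ha hab hb)).intervalIntegrable
  have hintρm : ∀ a b : ℝ, R ≤ a → a ≤ b → b ≤ 3*R →
      IntervalIntegrable (fun x => ρ x ^ m) volume a b := by
    intro a b ha hab hb
    apply AntitoneOn.intervalIntegrable
    intro x hx y hy hxy
    exact Real.rpow_le_rpow (hnn y (hsub a b ha hab hb hy))
      (hanti (hsub a b ha hab hb hx) (hsub a b ha hab hb hy) hxy) hm0.le
  have hintxρ : ∀ c a b : ℝ, R ≤ a → a ≤ b → b ≤ 3*R →
      IntervalIntegrable (fun x => (x - c) * ρ x) volume a b := by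
    intro c a b ha hab hb
    exact (hintρ a b ha hab hb).continuousOn_mul
      ((continuous_id.sub continuous_const).continuousOn)
  set w : ℝ → ℝ := fun r => ∫ x in r..(3*R), ρ x with hwdef
  have hwr : ∀ r' : ℝ, w r' = ∫ x in r'..(3*R), ρ x := fun r' => by simp only [hwdef]
  clear_value w
  -- the key pointwise facts at every r ∈ [R, 2R]
  have hkeyfact : ∀ r ∈ Icc R (2*R), 0 < ρ r ∧ 0 < w r ∧ C * M^(m-1) * w r < 2*R*ρ r ^ m := by
    intro r hr
    have hr3 : r ≤ 3*R := by linarith [hr.2, hR]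
    have hrIcc3 : r ∈ Icc R (3*R) := ⟨hr.1, hr3⟩
    have hmemr : ∀ x ∈ Icc r (3*R), x ∈ Icc R (3*R) := fun x hx => ⟨le_trans hr.1 hx.1, hx.2⟩
    have hDnn : 0 ≤ ∫ x in r..(3*R), ρ x ^ m :=
      intervalIntegral.integral_nonneg hr3
        (fun u hu => Real.rpow_nonneg (hnn u (hmemr u hu)) m)
    have hgnn : 0 ≤ ∫ x in r..(3*R), (x - r) * ρ x :=
      intervalIntegral.integral_nonneg hr3
        (fun u hu => mul_nonneg (by linarith [hu.1]) (hnn u (hmemr u hu)))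
    have hCM : 0 ≤ C / R * M ^ (m-1) :=
      mul_nonneg (div_nonneg hC0.le hR.le) (Real.rpow_nonneg hMnn _)
    have hcr := hcon r hr
    -- ρ r > 0
    have hρr : 0 < ρ r := by
      rcases (hnn r hrIcc3).lt_or_eq with h | h
      · exact h
      · exfalso
        have hzero : ∀ x ∈ uIcc r (3*R), ρ x ^ m = 0 := by
          intro x hx
          have hx' : x ∈ Icc r (3*R) := by rwa [uIcc_of_le hr3] at hx
          have h1 : ρ x ≤ ρ r := hanti hrIcc3 (hmemr x hx') hx'.1
          have h2 : ρ x = 0 := le_antisymm (by rw [← h] at h1; exact h1) (hnn x (hmemr x hx'))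
          rw [h2, Real.zero_rpow hm0.ne']
        have hD0 : (∫ x in r..(3*R), ρ x ^ m) = 0 := by
          rw [intervalIntegral.integral_congr hzero]
          simp
        rw [hD0] at hcr
        nlinarith [mul_nonneg hCM hgnn]
    -- w bounds
    have hwnn : 0 ≤ w r := by
      rw [hwr]
      exact intervalIntegral.integral_nonneg hr3 (fun u hu => hnn u (hmemr u hu))
    have hwle : w r ≤ (3*R - r) * ρ r := by
      have h1 : (∫ x in r..(3*R), ρ x) ≤ ∫ x in r..(3*R), ρ r := by
        apply intervalIntegral.integral_mono_on hr3 (hintρ r (3*R) hr.1 hr3 le_rfl)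
          intervalIntegrable_const
        intro x hx
        exact hanti hrIcc3 (hmemr x hx) hx.1
      rw [intervalIntegral.integral_const, smul_eq_mul] at h1
      rw [hwr]
      exact h1
    -- D ≤ ρ r ^ (m-1) * w r
    have hA2 : (∫ x in r..(3*R), ρ x ^ m) ≤ ρ r ^ (m-1) * w r := by
      have hpt : ∀ x ∈ Icc r (3*R), ρ x ^ m ≤ ρ r ^ (m-1) * ρ x := by
        intro x hx
        rcases (hnn x (hmemr x hx)).lt_or_eq with hx0 | hx0
        · have h1 : ρ x ^ m = ρ x ^ (m-1) * ρ x := by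
            rw [← Real.rpow_add_one hx0.ne' (m-1), sub_add_cancel]
          rw [h1]
          apply mul_le_mul_of_nonneg_right _ hx0.le
          exact Real.rpow_le_rpow hx0.le (hanti hrIcc3 (hmemr x hx) hx.1) hm1
        · rw [← hx0, Real.zero_rpow hm0.ne', mul_zero]
      calc (∫ x in r..(3*R), ρ x ^ m) ≤ ∫ x in r..(3*R), ρ r ^ (m-1) * ρ x := by
            apply intervalIntegral.integral_mono_on hr3 (hintρm r (3*R) hr.1 hr3 le_rfl)
              ((hintρ r (3*R) hr.1 hr3 le_rfl).const_mul _) hpt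
      _ = ρ r ^ (m-1) * w r := by rw [hwr]; exact intervalIntegral.integral_const_mul _ _
    -- bathtub lemma : w r ^2 / (2 ρ r) ≤ g r
    have hbath : w r ^ 2 / (2 * ρ r) ≤ ∫ x in r..(3*R), (x - r) * ρ x := by
      set L := w r / ρ r with hLdef
      have hL0 : 0 ≤ L := div_nonneg hwnn hρr.le
      have hLle : r + L ≤ 3*R := by
        have h1 : L ≤ 3*R - r := by
          rw [hLdef, div_le_iff₀ hρr]
          nlinarith [hwle]
        linarith
      have hrL : r ≤ r + L := by linarith
      have ha1 : R ≤ r := hr.1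
      have hsplitg : (∫ x in r..(3*R), (x - r) * ρ x) =
          (∫ x in r..(r+L), (x - r) * ρ x) + ∫ x in (r+L)..(3*R), (x - r) * ρ x :=
        (intervalIntegral.integral_add_adjacent_intervals
          (hintxρ r r (r+L) ha1 hrL hLle) (hintxρ r (r+L) (3*R) (by linarith) hLle le_rfl)).symm
      have hsplitw : (∫ x in r..(r+L), ρ x) + (∫ x in (r+L)..(3*R), ρ x) = w r := by
        rw [hwr]
        exact intervalIntegral.integral_add_adjacent_intervals
          (hintρ r (r+L) ha1 hrL hLle) (hintρ (r+L) (3*R) (by linarith) hLle le_rfl)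
      have hE1 : L * ∫ x in (r+L)..(3*R), ρ x ≤ ∫ x in (r+L)..(3*R), (x - r) * ρ x := by
        rw [← intervalIntegral.integral_const_mul]
        apply intervalIntegral.integral_mono_on hLle
          ((hintρ (r+L) (3*R) (by linarith) hLle le_rfl).const_mul _)
          (hintxρ r (r+L) (3*R) (by linarith) hLle le_rfl)
        intro x hx
        apply mul_le_mul_of_nonneg_right (by linarith [hx.1])
          (hnn x ⟨by linarith [hx.1], hx.2⟩)
      have hE2 : (∫ x in r..(r+L), ((x - r) - L) * ρ r) ≤
          ∫ x in r..(r+L), ((x - r) - L) * ρ x := by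
        apply intervalIntegral.integral_mono_on hrL
          ((((continuous_id.sub continuous_const).sub continuous_const).mul
            continuous_const).intervalIntegrable _ _)
          ((hintρ r (r+L) ha1 hrL hLle).continuousOn_mul
            (((continuous_id.sub continuous_const).sub continuous_const).continuousOn))
        intro x hx
        have h1 : ρ x ≤ ρ r := hanti hrIcc3 ⟨le_trans ha1 hx.1, le_trans hx.2 hLle⟩ hx.1
        have h2 : (x - r) - L ≤ 0 := by linarith [hx.2]
        exact mul_le_mul_of_nonpos_left h1 h2
      have hE3 : (∫ x in r..(r+L), ((x - r) - L) * ρ r) = -(L^2/2) * ρ r := by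
        rw [intervalIntegral.integral_mul_const]
        have h1 : (fun x : ℝ => (x - r) - L) = fun x : ℝ => x - (r + L) := by
          funext x; ring
        have h2 : (∫ x in r..(r+L), ((x - r) - L)) = ∫ x in r..(r+L), (x - (r+L)) := by
          rw [h1]
        rw [h2, intervalIntegral.integral_comp_sub_right (fun u => u) (r+L)]
        rw [integral_id]
        have e1 : r - (r + L) = -L := by ring
        have e2 : r + L - (r + L) = 0 := by ring
        rw [e1, e2]
        ring
      have hE4 : (∫ x in r..(r+L), ((x - r) - L) * ρ x) =
          (∫ x in r..(r+L), (x - r) * ρ x) - L * ∫ x in r..(r+L), ρ x := by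
        rw [← intervalIntegral.integral_const_mul,
          ← intervalIntegral.integral_sub (hintxρ r r (r+L) ha1 hrL hLle)
            ((hintρ r (r+L) ha1 hrL hLle).const_mul _)]
        congr 1
        funext x
        ring
      have hLw : L * ρ r = w r := by
        rw [hLdef]; field_simp
      have hfin : w r ^ 2 / (2 * ρ r) ≤ ∫ x in r..(3*R), (x - r) * ρ x := by
        have e5 : -(L^2/2) * ρ r + L * w r = w r ^2 / (2 * ρ r) := by
          rw [hLdef]; field_simp; ring
        nlinarith [hE1, hE2, hE3, hE4, hsplitg, hsplitw, e5]
      exact hfin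
    -- combine with hcon
    refine ⟨hρr, ?_, ?_⟩
    · by_contra hw0
      push_neg at hw0
      have hw0' : w r = 0 := le_antisymm hw0 hwnn
      have hD0 : (∫ x in r..(3*R), ρ x ^ m) ≤ 0 := by
        rw [← mul_zero (ρ r ^ (m-1)), ← hw0']
        exact hA2
      nlinarith [mul_nonneg hCM hgnn]
    · have hw0 : 0 < w r := by
        by_contra hw0
        push_neg at hw0
        have hw0' : w r = 0 := le_antisymm hw0 hwnn
        have hD0 : (∫ x in r..(3*R), ρ x ^ m) ≤ 0 := by
          rw [← mul_zero (ρ r ^ (m-1)), ← hw0']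
          exact hA2
        nlinarith [mul_nonneg hCM hgnn]
      -- C/R * M^(m-1) * (w²/(2ρr)) < ρ^{m-1} w
      have hkey : C/R * M^(m-1) * (w r^2/(2*ρ r)) < ρ r ^ (m-1) * w r := by
        calc C/R * M^(m-1) * (w r^2/(2*ρ r)) ≤
            C/R * M^(m-1) * ∫ x in r..(3*R), (x - r) * ρ x :=
              mul_le_mul_of_nonneg_left hbath hCM
        _ < ∫ x in r..(3*R), ρ x ^ m := hcr
        _ ≤ ρ r ^ (m-1) * w r := hA2
      have hρm : ρ r ^ m = ρ r ^ (m-1) * ρ r := by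
        rw [← Real.rpow_add_one hρr.ne' (m-1), sub_add_cancel]
      rw [hρm]
      -- multiply hkey by 2*ρr*R/(w r)
      have h6 : C/R * M^(m-1) * (w r^2/(2*ρ r)) * ((2*ρ r * R)/ w r) <
          ρ r ^ (m-1) * w r * ((2*ρ r * R)/ w r) := by
        apply mul_lt_mul_of_pos_right hkey
        positivity
      have e7 : C/R * M^(m-1) * (w r^2/(2*ρ r)) * ((2*ρ r * R)/ w r) =
          C * M^(m-1) * w r := by
        field_simp
      have e8 : ρ r ^ (m-1) * w r * ((2*ρ r * R)/ w r) = 2*R*(ρ r ^ (m-1) * ρ r) := by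
        field_simp
      rw [e7, e8] at h6
      exact h6
  -- global consequences
  have hM0 : 0 < M := (hkeyfact R ⟨le_rfl, by linarith⟩).1
  have hMm1pos : 0 < M ^ (m-1) := Real.rpow_pos_of_pos hM0 _
  have hP0 : (0:ℝ) < C * M^(m-1) / (2*R) := by positivity
  set c₁ := (C * M^(m-1) / (2*R)) ^ (1/m) with hc₁def
  have hc₁0 : 0 < c₁ := Real.rpow_pos_of_pos hP0 _
  have hc₁m : c₁ ^ m = C * M^(m-1) / (2*R) := by
    rw [hc₁def, ← Real.rpow_mul hP0.le, one_div_mul_cancel hm0.ne', Real.rpow_one]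
  have hposw : ∀ s ∈ Icc R (2*R), 0 < w s := fun s hs => (hkeyfact s hs).2.1
  have hlipw : ∀ r s : ℝ, R ≤ r → r ≤ s → s ≤ 2*R → w r - w s ≤ M * (s - r) := by
    intro r s h1 h2 h3
    have hs3 : s ≤ 3*R := by linarith
    have hdiff : w r - w s = ∫ x in r..s, ρ x := by
      rw [hwr, hwr]
      have := intervalIntegral.integral_add_adjacent_intervals
        (hintρ r s h1 h2 hs3) (hintρ s (3*R) (by linarith) hs3 le_rfl)
      linarith [this]
    have hub : (∫ x in r..s, ρ x) ≤ ∫ x in r..s, M :=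
      intervalIntegral.integral_mono_on h2 (hintρ r s h1 h2 hs3) intervalIntegrable_const
        (fun x hx => hρle x ⟨le_trans h1 hx.1, by linarith [hx.2]⟩)
    rw [intervalIntegral.integral_const, smul_eq_mul] at hub
    nlinarith [hdiff, hub]
  have hchainw : ∀ r s : ℝ, R ≤ r → r ≤ s → s ≤ 2*R →
      w s + c₁ * (s - r) * w s ^ (1/m) ≤ w r := by
    intro r s h1 h2 h3
    have hs3 : s ≤ 3*R := by linarith
    have hsIcc : s ∈ Icc R (2*R) := ⟨le_trans h1 h2, h3⟩
    obtain ⟨hρs, hws, hdag⟩ := hkeyfact s hsIcc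
    have hdiff : w r - w s = ∫ x in r..s, ρ x := by
      rw [hwr, hwr]
      have := intervalIntegral.integral_add_adjacent_intervals
        (hintρ r s h1 h2 hs3) (hintρ s (3*R) (by linarith) hs3 le_rfl)
      linarith [this]
    have hlow : (s - r) * ρ s ≤ ∫ x in r..s, ρ x := by
      have h4 : (∫ x in r..s, ρ s) ≤ ∫ x in r..s, ρ x := by
        apply intervalIntegral.integral_mono_on h2 intervalIntegrable_const
          (hintρ r s h1 h2 hs3)
        intro x hx
        exact hanti ⟨le_trans h1 hx.1, by linarith [hx.2]⟩ ⟨le_trans h1 h2, hs3⟩ hx.2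
      rw [intervalIntegral.integral_const, smul_eq_mul] at h4
      exact h4
    have hρlow : c₁ * w s ^ (1/m) ≤ ρ s := by
      have h5 : c₁ ^ m * w s ≤ ρ s ^ m := by
        rw [hc₁m, div_mul_eq_mul_div, div_le_iff₀ (by positivity : (0:ℝ) < 2*R)]
        nlinarith [hdag]
      have h6 : (c₁ ^ m * w s) ^ (1/m) ≤ (ρ s ^ m) ^ (1/m) :=
        Real.rpow_le_rpow (by positivity) h5 (by positivity)
      have e1 : (c₁ ^ m * w s) ^ (1/m) = c₁ * w s ^ (1/m) := by
        rw [Real.mul_rpow (by positivity) hws.le, ← Real.rpow_mul hc₁0.le,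
          mul_one_div_cancel hm0.ne', Real.rpow_one]
      have e2 : (ρ s ^ m) ^ (1/m) = ρ s := by
        rw [← Real.rpow_mul hρs.le, mul_one_div_cancel hm0.ne', Real.rpow_one]
      rw [e1, e2] at h6
      exact h6
    have hmul : c₁ * (s - r) * w s ^ (1/m) ≤ (s - r) * ρ s := by
      have h7 := mul_le_mul_of_nonneg_left hρlow (by linarith : (0:ℝ) ≤ s - r)
      nlinarith [h7]
    linarith [hdiff, hlow, hmul]
  have hfinal := chain_lemma hR hM0 hm hc₁0 w hposw hlipw hchainw
  obtain ⟨hρR, hwR0, hdagR⟩ := hkeyfact R ⟨le_rfl, by linarith⟩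
  rw [← hMdef] at hdagR
  have hMm : M ^ m = M^(m-1)*M := by
    rw [← Real.rpow_add_one hM0.ne' (m-1), sub_add_cancel]
  have hwRlt : w R < 2*R*M/C := by
    rw [lt_div_iff₀ hC0]
    have h9 : M^(m-1)*(C * w R) < M^(m-1)*(2*R*M) := by
      nlinarith [hdagR, hMm]
    have h10 := lt_of_mul_lt_mul_left h9 hMm1pos.le
    linarith
  set α := (m-1)/m with hαdef
  have hα0 : 0 < α := div_pos (by linarith) hm0
  have h1 : α * c₁ / 2 * R ≤ w R ^ α := hfinal
  have h2 : w R ^ α ≤ (2*R*M/C) ^ α := Real.rpow_le_rpow hwR0.le hwRlt.le hα0.le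
  set P := C * M^(m-1)/(2*R) with hPdef
  have hPα : 0 < P ^ α := Real.rpow_pos_of_pos hP0 _
  have e3 : 2*R*M/C = M^m / P := by
    rw [hPdef, hMm]
    field_simp
  have e4 : (M^m/P)^α = M^(m-1) / P^α := by
    rw [Real.div_rpow (Real.rpow_nonneg hMnn m) hP0.le]
    congr 1
    rw [← Real.rpow_mul hMnn]
    congr 1
    rw [hαdef]
    field_simp
  have h5 : α * c₁ / 2 * R * P ^ α ≤ M^(m-1) := by
    have h6 := mul_le_mul_of_nonneg_right (le_trans h1 h2) hPα.le
    rw [e3, e4] at h6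
    have e7 : M^(m-1) / P^α * P^α = M^(m-1) := by field_simp
    linarith [h6, e7]
  have e8 : c₁ * P ^ α = P := by
    rw [hc₁def, ← Real.rpow_add hP0]
    have e : 1/m + α = 1 := by rw [hαdef]; field_simp; ring
    rw [e, Real.rpow_one]
  have h9 : α / 2 * R * P ≤ M^(m-1) := by
    have e10 : α * c₁ / 2 * R * P ^ α = α/2*R*(c₁ * P^α) := by ring
    rw [e10, e8] at h5
    linarith [h5]
  have h10 : α * C ≤ 4 := by
    have e9 : α/2*R*P = α*C/4 * M^(m-1) := by
      rw [hPdef]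
      field_simp
      ring
    rw [e9] at h9
    nlinarith [hMm1pos]
  have h11 := const_big hm
  have h12 : C * (m-1) ≤ 4 * m := by
    have h13 : α * C * m ≤ 4 * m := by nlinarith [h10, hm0]
    have e10 : α * C * m = C * (m-1) := by
      rw [hαdef]
      field_simp
    linarith [h13, e10.symm.le, e10.le]
  linarith [h11, h12]
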